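/- Let F be a closed subbifunctor of Ext^1 on an abelian category 𝒜, P• a bounded-above complex of F-projective objects, and X• any complex. Then the localization functor induces an isomorphism Hom_{K(𝒜)}(P•, X•) ≅ Hom_{D_F(𝒜)}(P•, X•), where D_F(𝒜) is the Verdier quotient of the homotopy category K(𝒜) by the thick subcategory of F-acyclic complexes. -/

import Mathlib

open CategoryTheory CategoryTheory.Limits CategoryTheory.Category

universe w v u v' u'

namespace RelDer

variable {𝒜 : Type u} [Category.{v} 𝒜] [Abelian 𝒜]

/-- `g` is an `F`-epimorphism: it fits into an `F`-exact short exact sequence. -/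
def FEpi (F : ShortComplex 𝒜 → Prop) {B C : 𝒜} (g : B ⟶ C) : Prop :=
  ∃ (K : 𝒜) (k : K ⟶ B) (w : k ≫ g = 0), F (ShortComplex.mk k g w)

/-- `f` is an `F`-monomorphism. -/
def FMono (F : ShortComplex 𝒜 → Prop) {A B : 𝒜} (f : A ⟶ B) : Prop :=
  ∃ (C : 𝒜) (g : B ⟶ C) (w : f ≫ g = 0), F (ShortComplex.mk f g w)

/-- `P` is `F`-projective: `Hom(P,-)` sends `F`-exact sequences to exact sequences. -/
def FProjective (F : ShortComplex 𝒜 → Prop) (P : 𝒜) : Prop :=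
  ∀ (S : ShortComplex 𝒜), F S → ∀ (p : P ⟶ S.X₃), ∃ q : P ⟶ S.X₂, q ≫ S.g = p

/-- `I` is `F`-injective. -/
def FInjective (F : ShortComplex 𝒜 → Prop) (I : 𝒜) : Prop :=
  ∀ (S : ShortComplex 𝒜), F S → ∀ (p : S.X₁ ⟶ I), ∃ q : S.X₂ ⟶ I, S.f ≫ q = p

/-- `F` has enough projectives. -/
def HasEnoughFProjectives (F : ShortComplex 𝒜 → Prop) : Prop :=
  ∀ M : 𝒜, ∃ (P : 𝒜) (g : P ⟶ M), FProjective F P ∧ FEpi F g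

/-- `F` has enough injectives. -/
def HasEnoughFInjectives (F : ShortComplex 𝒜 → Prop) : Prop :=
  ∀ M : 𝒜, ∃ (I : 𝒜) (f : M ⟶ I), FInjective F I ∧ FMono F f

lemma image_ι_comp_d (X : CochainComplex 𝒜 ℤ) (i : ℤ) :
    image.ι (X.d (i-1) i) ≫ X.d i (i+1) = 0 := by
  rw [← cancel_epi (factorThruImage (X.d (i-1) i)), image.fac_assoc,
    HomologicalComplex.d_comp_d, comp_zero]

/-- The short complex `Im d^{i-1} → X^i → Im d^i` associated to a cochain complex. -/
noncomputable def imagesShortComplex (X : CochainComplex 𝒜 ℤ) (i : ℤ) : ShortComplex 𝒜 :=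
  ShortComplex.mk (image.ι (X.d (i-1) i)) (factorThruImage (X.d i (i+1)))
    (by rw [← cancel_mono (image.ι (X.d i (i+1))), assoc, image.fac, zero_comp,
      image_ι_comp_d])

/-- A complex is `F`-acyclic if each `0 → Im d^{i-1} → X^i → Im d^i → 0` is `F`-exact. -/
def FAcyclic (F : ShortComplex 𝒜 → Prop) (X : CochainComplex 𝒜 ℤ) : Prop :=
  ∀ i : ℤ, F (imagesShortComplex X i)

/-- A chain map is an `F`-quasi-isomorphism if its mapping cone is `F`-acyclic. -/
def FQuasiIso (F : ShortComplex 𝒜 → Prop) {X Y : CochainComplex 𝒜 ℤ} (f : X ⟶ Y) : Prop :=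
  FAcyclic F (CochainComplex.mappingCone f)

def BoundedAbove (X : CochainComplex 𝒜 ℤ) : Prop :=
  ∃ n : ℤ, ∀ i, n < i → IsZero (X.X i)

def Bounded (X : CochainComplex 𝒜 ℤ) : Prop :=
  ∃ a b : ℤ, ∀ i, (i < a ∨ b < i) → IsZero (X.X i)

/-- An equivalence of (pre)triangulated categories. -/
structure TriangleEquivalence (C : Type u) (D : Type u') [Category.{v} C] [Category.{v'} D]
    [HasShift C ℤ] [HasShift D ℤ] [Preadditive C] [Preadditive D]
    [HasZeroObject C] [HasZeroObject D]
    [∀ n : ℤ, (shiftFunctor C n).Additive] [∀ n : ℤ, (shiftFunctor D n).Additive]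
    [Pretriangulated C] [Pretriangulated D] where
  e : C ≌ D
  commShift : e.functor.CommShift ℤ
  isTriangulated : letI := commShift; e.functor.IsTriangulated

/-- Two maps are stably equal if their difference factors through an object satisfying `P`. -/
def stableHomRel (P : 𝒜 → Prop) : HomRel 𝒜 := fun {X Y} f g =>
  ∃ (Z : 𝒜) (_ : P Z) (a : X ⟶ Z) (b : Z ⟶ Y), f - g = a ≫ b

/-- The stable category of `𝒜` modulo objects satisfying `P`. -/
abbrev StableCategory (P : 𝒜 → Prop) := CategoryTheory.Quotient (stableHomRel P)

/-- The complex `Hom(P^•, Y)` of abelian groups, whose homology computes relative Ext. -/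
noncomputable def homComplex (P : CochainComplex 𝒜 ℤ) (Y : 𝒜) :
    HomologicalComplex AddCommGrpCat (ComplexShape.up ℤ).symm :=
  ((preadditiveYoneda.obj Y).mapHomologicalComplex (ComplexShape.up ℤ).symm).obj P.op

/-- The relative Ext group `Ext^i_F(X,Y)` computed from an `F`-projective resolution `P` of
`X` as the `i`-th cohomology of `Hom(P^•,Y)`. -/
noncomputable def extFGroup (P : CochainComplex 𝒜 ℤ) (Y : 𝒜) (i : ℤ) : AddCommGrpCat :=
  (homComplex P Y).homology (-i)

/-- `P`, together with the augmentation `ε`, is an `F`-projective resolution of `X`. -/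
def IsFProjResolution (F : ShortComplex 𝒜 → Prop) (X : 𝒜) (P : CochainComplex 𝒜 ℤ)
    (ε : P ⟶ (CochainComplex.singleFunctor 𝒜 0).obj X) : Prop :=
  (∀ i : ℤ, 0 < i → IsZero (P.X i)) ∧ (∀ i : ℤ, FProjective F (P.X i)) ∧ FQuasiIso F ε

/-- `X` has `F`-projective dimension at most `m`. -/
def FProjDimLe (F : ShortComplex 𝒜 → Prop) (X : 𝒜) (m : ℕ) : Prop :=
  ∃ (P : CochainComplex 𝒜 ℤ) (ε : P ⟶ (CochainComplex.singleFunctor 𝒜 0).obj X),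
    IsFProjResolution F X P ε ∧ ∀ i : ℤ, i < -(m : ℤ) → IsZero (P.X i)

/-- `I`, together with the augmentation `ε`, is an `F`-injective coresolution of `X`. -/
def IsFInjCoresolution (F : ShortComplex 𝒜 → Prop) (X : 𝒜) (I : CochainComplex 𝒜 ℤ)
    (ε : (CochainComplex.singleFunctor 𝒜 0).obj X ⟶ I) : Prop :=
  (∀ i : ℤ, i < 0 → IsZero (I.X i)) ∧ (∀ i : ℤ, FInjective F (I.X i)) ∧ FQuasiIso F ε

/-- `X` has `F`-injective dimension at most `m`. -/
def FInjDimLe (F : ShortComplex 𝒜 → Prop) (X : 𝒜) (m : ℕ) : Prop :=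
  ∃ (I : CochainComplex 𝒜 ℤ) (ε : (CochainComplex.singleFunctor 𝒜 0).obj X ⟶ I),
    IsFInjCoresolution F X I ε ∧ ∀ i : ℤ, (m : ℤ) < i → IsZero (I.X i)

/-- The `F`-projective dimension of `X`, valued in `ℕ∞`. -/
noncomputable def FProjDim (F : ShortComplex 𝒜 → Prop) (X : 𝒜) : ℕ∞ :=
  sInf {n : ℕ∞ | ∃ m : ℕ, n = m ∧ FProjDimLe F X m}

/-- The `F`-injective dimension of `X`, valued in `ℕ∞`. -/
noncomputable def FInjDim (F : ShortComplex 𝒜 → Prop) (X : 𝒜) : ℕ∞ :=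
  sInf {n : ℕ∞ | ∃ m : ℕ, n = m ∧ FInjDimLe F X m}

/-- The `F`-global dimension. -/
noncomputable def FGlobalDim (F : ShortComplex 𝒜 → Prop) : ℕ∞ :=
  ⨆ X : 𝒜, FProjDim F X

/-- The `F`-finitistic dimension. -/
noncomputable def FFinitisticDim (F : ShortComplex 𝒜 → Prop) : ℕ∞ :=
  ⨆ X : {X : 𝒜 // FProjDim F X ≠ ⊤}, FProjDim F X.1

/-- The class of all short exact sequences: the absolute (non-relative) exact structure. -/
def allExact : ShortComplex 𝒜 → Prop := fun S => S.ShortExact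

/-- `M` belongs to `add G`. -/
def InAdd (G M : 𝒜) : Prop :=
  haveI : HasFiniteBiproducts 𝒜 := Abelian.hasFiniteBiproducts
  ∃ (n : ℕ) (N : 𝒜), Nonempty ((M ⊞ N) ≅ (⨁ fun _ : Fin n => G))

section TriangulatedSubcategory

open Pretriangulated

/-- The former Mathlib structure `CategoryTheory.Triangulated.Subcategory` (removed since),
restated with its old fields. -/
structure Triangulated.Subcategory (C : Type*) [Category C] [HasZeroObject C] [HasShift C ℤ]
    [Preadditive C] [∀ n : ℤ, (shiftFunctor C n).Additive] [Pretriangulated C] where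
  P : C → Prop
  zero' : ∃ (Z : C) (_ : IsZero Z), P Z
  shift (X : C) (n : ℤ) : P X → P (X⟦n⟧)
  ext₂' (T : Triangle C) (_ : T ∈ distTriang C) : P T.obj₁ → P T.obj₃ →
    ObjectProperty.isoClosure P T.obj₂

/-- The former `CategoryTheory.Triangulated.Subcategory.W`. -/
def Triangulated.Subcategory.W {C : Type*} [Category C] [HasZeroObject C] [HasShift C ℤ]
    [Preadditive C] [∀ n : ℤ, (shiftFunctor C n).Additive] [Pretriangulated C]
    (S : Triangulated.Subcategory C) : MorphismProperty C :=
  fun X Y f => ∃ (Z : C) (g : Y ⟶ Z) (h : Z ⟶ X⟦(1 : ℤ)⟧)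
    (_ : Triangle.mk f g h ∈ distTriang C), S.P Z

end TriangulatedSubcategory

/-- `T` generates the objects satisfying `Gen` as a triangulated category
(closed under isomorphisms and retracts/direct summands). -/
def Generates {𝒯 : Type u'} [Category.{v'} 𝒯] [HasZeroObject 𝒯] [HasShift 𝒯 ℤ]
    [Preadditive 𝒯] [∀ n : ℤ, (shiftFunctor 𝒯 n).Additive] [Pretriangulated 𝒯]
    (T : 𝒯) (Gen : 𝒯 → Prop) : Prop :=
  ∀ (S : Triangulated.Subcategory 𝒯),
    (∀ X Y : 𝒯, (X ≅ Y) → S.P X → S.P Y) →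
    (∀ X Y : 𝒯, (∃ (r : X ⟶ Y) (s : Y ⟶ X), s ≫ r = 𝟙 Y) → S.P X → S.P Y) →
    S.P T → ∀ X : 𝒯, Gen X → S.P X


section Auxiliary

variable {𝒜 : Type u} [Category.{v} 𝒜] [Abelian 𝒜]
variable (F : ShortComplex 𝒜 → Prop) (hSE : ∀ S, F S → S.ShortExact)
variable {Z : CochainComplex 𝒜 ℤ} (hZ : FAcyclic F Z)

include hSE hZ in
/-- Key lifting step: a map into `Z.X (a+1)` killed by the differential lifts through
`Z.d a (a+1)`, provided the source is `F`-projective and `Z` is `F`-acyclic. -/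
lemma step {Q : 𝒜} (hQ : FProjective F Q) (a : ℤ) (v : Q ⟶ Z.X (a+1))
    (hv : v ≫ Z.d (a+1) (a+1+1) = 0) :
    ∃ φ : Q ⟶ Z.X a, φ ≫ Z.d a (a+1) = v := by
  have hS : (imagesShortComplex Z (a+1)).ShortExact := hSE _ (hZ (a+1))
  have := hS.mono_f
  have hvg : v ≫ (imagesShortComplex Z (a+1)).g = 0 := by
    refine (cancel_mono (image.ι (Z.d (a+1) (a+1+1)))).mp ?_
    dsimp [imagesShortComplex]
    rw [assoc, image.fac, hv]
    exact zero_comp.symm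
  have hex : ∃ w : Q ⟶ image (Z.d (a+1-1) (a+1)),
      w ≫ image.ι (Z.d (a+1-1) (a+1)) = v :=
    ⟨hS.exact.lift v hvg, hS.exact.lift_f v hvg⟩
  rw [show a + 1 - 1 = a by omega] at hex
  obtain ⟨w, hw⟩ := hex
  obtain ⟨q, hq⟩ := hQ (imagesShortComplex Z a) (hZ a) w
  refine ⟨q, ?_⟩
  have hq' : q ≫ factorThruImage (Z.d a (a+1)) = w := hq
  calc q ≫ Z.d a (a+1)
      = q ≫ factorThruImage (Z.d a (a+1)) ≫ image.ι (Z.d a (a+1)) :=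
        congrArg (fun t => q ≫ t) (image.fac (Z.d a (a+1))).symm
    _ = w ≫ image.ι (Z.d a (a+1)) :=
        (assoc _ _ _).symm.trans (congrArg (· ≫ image.ι (Z.d a (a+1))) hq')
    _ = v := hw

variable {P : CochainComplex 𝒜 ℤ} (hProj : ∀ i : ℤ, FProjective F (P.X i))
  (u : P ⟶ Z) (n : ℤ) (hn : ∀ i, n < i → IsZero (P.X i))

include hSE hZ hProj hn in
/-- The homotopy components, built by downward recursion. -/
noncomputable def homotAux (i : ℤ) :
    {φ : P.X (i+1) ⟶ Z.X i // P.d i (i+1) ≫ φ ≫ Z.d i (i+1) = P.d i (i+1) ≫ u.f (i+1)} :=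
  if hi : n < i + 1 then
    ⟨0, by
      have h1 : u.f (i+1) = 0 := (hn _ hi).eq_of_src _ _
      simp [h1]⟩
  else
    ⟨(step F hSE hZ (hProj (i+1)) i
        (u.f (i+1) - P.d (i+1) (i+1+1) ≫ (homotAux (i+1)).1)
        (by
          have hcomm : u.f (i+1) ≫ Z.d (i+1) (i+1+1) = P.d (i+1) (i+1+1) ≫ u.f (i+1+1) :=
            u.comm (i+1) (i+1+1)
          rw [Preadditive.sub_comp, assoc, (homotAux (i+1)).2, hcomm, sub_self])).choose, by
      rw [(step F hSE hZ (hProj (i+1)) i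
        (u.f (i+1) - P.d (i+1) (i+1+1) ≫ (homotAux (i+1)).1)
        (by
          have hcomm : u.f (i+1) ≫ Z.d (i+1) (i+1+1) = P.d (i+1) (i+1+1) ≫ u.f (i+1+1) :=
            u.comm (i+1) (i+1+1)
          rw [Preadditive.sub_comp, assoc, (homotAux (i+1)).2, hcomm, sub_self])).choose_spec]
      simp⟩
termination_by (n - i).toNat
decreasing_by omega

include hSE hZ hProj hn in
lemma homotAux_d (i : ℤ) :
    (homotAux F hSE hZ hProj u n hn i).1 ≫ Z.d i (i+1) =
      u.f (i+1) - P.d (i+1) (i+1+1) ≫ (homotAux F hSE hZ hProj u n hn (i+1)).1 := by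
  rw [homotAux]
  split_ifs with hi
  · have h1 : u.f (i+1) = 0 := (hn _ hi).eq_of_src _ _
    have h2 : P.d (i+1) (i+1+1) = 0 := (hn _ hi).eq_of_src _ _
    simp [h1, h2]
  · exact (step F hSE hZ (hProj (i+1)) i
        (u.f (i+1) - P.d (i+1) (i+1+1) ≫ (homotAux F hSE hZ hProj u n hn (i+1)).1)
        (by
          have hcomm : u.f (i+1) ≫ Z.d (i+1) (i+1+1) = P.d (i+1) (i+1+1) ≫ u.f (i+1+1) :=
            u.comm (i+1) (i+1+1)
          rw [Preadditive.sub_comp, assoc, (homotAux F hSE hZ hProj u n hn (i+1)).2, hcomm,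
            sub_self])).choose_spec

include hSE hZ hProj hn in
/-- Any chain map from a bounded above complex of `F`-projectives to an `F`-acyclic
complex is nullhomotopic. -/
lemma exists_nullHomotopy : Nonempty (Homotopy u 0) := by
  refine ⟨{ hom := fun i j => if h : i = j + 1 then eqToHom (congrArg P.X h) ≫ (homotAux F hSE hZ hProj u n hn j).1 else 0, zero := ?_, comm := ?_ }⟩
  · intro i j hne
    exact dif_neg (fun h => hne h.symm)
  · intro i
    obtain ⟨j, rfl⟩ : ∃ j, i = j + 1 := ⟨i - 1, by omega⟩
    rw [dNext_eq _ (show (ComplexShape.up ℤ).Rel (j+1) (j+1+1) from rfl),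
      prevD_eq _ (show (ComplexShape.up ℤ).Rel j (j+1) from rfl)]
    rw [dif_pos rfl, dif_pos rfl]
    simp only [eqToHom_refl, id_comp]
    rw [homotAux_d]
    simp only [HomologicalComplex.zero_f_apply, add_zero]
    abel

include hSE hProj hn in
/-- Any map in the homotopy category from a bounded above complex of `F`-projectives to an
object of `N` vanishes. -/
lemma hom_vanish (N : Triangulated.Subcategory (HomotopyCategory 𝒜 (ComplexShape.up ℤ)))
    (hN : ∀ Z : CochainComplex 𝒜 ℤ,
      N.P ((HomotopyCategory.quotient 𝒜 (ComplexShape.up ℤ)).obj Z) ↔ FAcyclic F Z)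
    (T : HomotopyCategory 𝒜 (ComplexShape.up ℤ)) (hT : N.P T)
    (g : (HomotopyCategory.quotient 𝒜 (ComplexShape.up ℤ)).obj P ⟶ T) : g = 0 := by
  have hZ : FAcyclic F T.as := (hN T.as).mp hT
  obtain ⟨u, rfl⟩ := (HomotopyCategory.quotient 𝒜 (ComplexShape.up ℤ)).map_surjective g
  obtain ⟨h⟩ := exists_nullHomotopy F hSE hZ hProj u n hn
  rw [HomotopyCategory.eq_of_homotopy u 0 h, Functor.map_zero]
  rfl

instance Triangulated.Subcategory.hasLeftCalculusOfFractions_W {C : Type*} [Category C]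
    [HasZeroObject C] [HasShift C ℤ] [Preadditive C] [∀ n : ℤ, (shiftFunctor C n).Additive]
    [Pretriangulated C] [IsTriangulated C] (S : Triangulated.Subcategory C) :
    S.W.HasLeftCalculusOfFractions := by
  haveI : ObjectProperty.IsTriangulated (S.P : ObjectProperty C) :=
    { exists_zero := by
        obtain ⟨Z, hZ, h⟩ := S.zero'
        exact ⟨Z, hZ, h⟩
      isStableUnderShiftBy := fun a => ⟨fun X hX => S.shift X a hX⟩
      ext₂' := S.ext₂' }
  exact (inferInstance : (ObjectProperty.trW (S.P : ObjectProperty C)).HasLeftCalculusOfFractions)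

end Auxiliary

universe u₁ v₁ u₂ v₂ u₃ v₃

/-- For a bounded above complex `P^•` of `F`-projectives, the localization functor induces
a bijection `Hom_{K(𝒜)}(P^•, X^•) ≅ Hom_{D_F(𝒜)}(P^•, X^•)`. -/
theorem statement7 {𝒜 : Type u} [Category.{v} 𝒜] [Abelian 𝒜]
    (F : ShortComplex 𝒜 → Prop) (hSE : ∀ S, F S → S.ShortExact)
    -- `F` is closed: `F`-acyclic complexes are stable under mapping cones
    (hclosed : ∀ (U V : CochainComplex 𝒜 ℤ) (u : U ⟶ V), FAcyclic F U → FAcyclic F V →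
      FAcyclic F (CochainComplex.mappingCone u))
    (N : Triangulated.Subcategory (HomotopyCategory 𝒜 (ComplexShape.up ℤ)))
    (hN : ∀ Z : CochainComplex 𝒜 ℤ,
      N.P ((HomotopyCategory.quotient 𝒜 (ComplexShape.up ℤ)).obj Z) ↔ FAcyclic F Z)
    {DF : Type u₁} [Category.{v₁} DF]
    (L : HomotopyCategory 𝒜 (ComplexShape.up ℤ) ⥤ DF) [L.IsLocalization N.W]
    (P X : CochainComplex 𝒜 ℤ) (hP : BoundedAbove P)
    (hProj : ∀ i : ℤ, FProjective F (P.X i)) :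
    Function.Bijective
      (fun f : ((HomotopyCategory.quotient 𝒜 (ComplexShape.up ℤ)).obj P ⟶
          (HomotopyCategory.quotient 𝒜 (ComplexShape.up ℤ)).obj X) => L.map f) := by
  obtain ⟨n, hn⟩ := hP
  constructor
  · intro f₁ f₂ h
    simp only at h
    rw [MorphismProperty.map_eq_iff_postcomp L N.W] at h
    obtain ⟨Y', s, hs, fac⟩ := h
    obtain ⟨Zc, gm, hm, hdist, hPZ⟩ := hs
    have hdist' := Pretriangulated.inv_rot_of_distTriang _ hdist
    have hzero : (f₁ - f₂) ≫ (Pretriangulated.Triangle.mk s gm hm).invRotate.mor₂ = 0 := by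
      change (f₁ - f₂) ≫ s = 0
      rw [Preadditive.sub_comp, fac, sub_self]
    obtain ⟨q, hq⟩ := Pretriangulated.Triangle.coyoneda_exact₂ _ hdist' (f₁ - f₂) hzero
    have hq0 : q = 0 :=
      hom_vanish F hSE hProj n hn N hN _ (N.shift Zc (-1) hPZ) q
    rw [hq0, zero_comp] at hq
    exact sub_eq_zero.mp hq
  · intro g
    obtain ⟨φ, hφ⟩ := Localization.exists_leftFraction L N.W g
    obtain ⟨Zc, gm, hm, hdist, hPZ⟩ := φ.hs
    have h0 : φ.f ≫ gm = 0 := hom_vanish F hSE hProj n hn N hN _ hPZ (φ.f ≫ gm)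
    obtain ⟨a, ha⟩ := Pretriangulated.Triangle.coyoneda_exact₂ _ hdist φ.f h0
    have ha' : φ.f = a ≫ φ.s := ha
    refine ⟨a, ?_⟩
    have := Localization.inverts L N.W φ.s φ.hs
    simp only
    rw [hφ, ← cancel_mono (L.map φ.s), MorphismProperty.LeftFraction.map_comp_map_s]
    exact (L.map_comp _ _).symm.trans (congrArg L.map ha'.symm)

end RelDer
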